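/- Let H be a finite abelian group of order n, let G = H ⋊ C₂ be the generalised dihedral group of H, and let C be the index-2 subgroup of G isomorphic to H. Suppose S ⊆ G satisfies 1 ∉ S, S = S⁻¹, and every element of G is a product of at most two elements of S. Write A = S ∩ C and B = S \ C, with m₁ = |A| and m₂ = |B|. Then m₂(m₁ + 1) ≥ n. -/

import Mathlib

/-- The action of `ℤˣ = {±1}` on a commutative group `H` in which `-1` acts by the
inversion automorphism. -/
def invAut (H : Type*) [CommGroup H] : ℤˣ →* MulAut H where
  toFun u := if u = 1 then 1 else MulEquiv.inv H
  map_one' := by simp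
  map_mul' a b := by
    rcases Int.units_eq_one_or a with ha | ha <;> rcases Int.units_eq_one_or b with hb | hb <;>
      subst ha <;> subst hb <;> ext h <;> simp [MulEquiv.inv] <;> exact (inv_inv h).symm

lemma invAut_one (H : Type*) [CommGroup H] (x : H) : invAut H 1 x = x := by
  simp [invAut]

lemma invAut_neg_one (H : Type*) [CommGroup H] (x : H) : invAut H (-1) x = x⁻¹ := by
  simp [invAut, MulEquiv.inv]
  rfl

lemma key_swap (H : Type*) [CommGroup H] (a b : H ⋊[invAut H] ℤˣ)
    (ha : a.right ≠ 1) (hb : b.right = 1) : a * b = b⁻¹ * a := by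
  rcases Int.units_eq_one_or a.right with h | h
  · exact absurd h ha
  · have hl : (a * b).left = (b⁻¹ * a).left := by
      rw [SemidirectProduct.mul_left, SemidirectProduct.mul_left, SemidirectProduct.inv_left,
        SemidirectProduct.inv_right, h, hb]
      simp [invAut_one, invAut_neg_one, mul_comm]
    have hr : (a * b).right = (b⁻¹ * a).right := by
      rw [SemidirectProduct.mul_right, SemidirectProduct.mul_right,
        SemidirectProduct.inv_right, hb]
      simp
    exact SemidirectProduct.ext hl hr

/-- **Counting step of Lemma 2.** Let `G = H ⋊ C₂` be the generalised dihedral group of a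
finite abelian group `H` of order `n`, and let `C = H × {1}` be the index-2 subgroup of `G`
isomorphic to `H` (the elements with trivial `C₂`-component). Let `S ⊆ G` be inverse-closed,
avoid the identity, and be such that every element of `G` is a product of at most two
elements of `S`. Writing `A = S ∩ C`, `B = S \ C`, `m₁ = |A|`, `m₂ = |B|`, we have
`m₂(m₁ + 1) ≥ n`. -/
theorem generalised_dihedral_counting
    (H : Type*) [CommGroup H] [Fintype H] (n : ℕ) (hn : Fintype.card H = n)
    (S : Finset (H ⋊[invAut H] ℤˣ))
    (h1 : (1 : H ⋊[invAut H] ℤˣ) ∉ S)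
    (hinv : ∀ s ∈ S, s⁻¹ ∈ S)
    (hcov : ∀ g : H ⋊[invAut H] ℤˣ, g = 1 ∨ g ∈ S ∨ ∃ a ∈ S, ∃ b ∈ S, g = a * b)
    (m₁ m₂ : ℕ)
    (hm₁ : m₁ = (S.filter (fun s => s.right = 1)).card)
    (hm₂ : m₂ = (S.filter (fun s => s.right ≠ 1)).card) :
    m₂ * (m₁ + 1) ≥ n := by
  classical
  subst hn
  haveI : Fintype (H ⋊[invAut H] ℤˣ) :=
    Fintype.ofEquiv (H × ℤˣ)
      ⟨fun p => ⟨p.1, p.2⟩, fun g => (g.left, g.right), fun p => rfl,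
        fun g => SemidirectProduct.ext rfl rfl⟩
  set A := S.filter (fun s => s.right = 1) with hA
  set B := S.filter (fun s => s.right ≠ 1) with hB
  -- the set of elements outside C has cardinality n
  have hcard : (Finset.univ.filter (fun g : H ⋊[invAut H] ℤˣ => g.right ≠ 1)).card = Fintype.card H := by
    have himg : Finset.univ.filter (fun g : H ⋊[invAut H] ℤˣ => g.right ≠ 1)
        = Finset.univ.image (fun h : H => (⟨h, -1⟩ : H ⋊[invAut H] ℤˣ)) := by
      ext g
      simp only [Finset.mem_filter, Finset.mem_univ, true_and, Finset.mem_image]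
      constructor
      · intro hg
        rcases Int.units_eq_one_or g.right with h | h
        · exact absurd h hg
        · exact ⟨g.left, by cases g; simp_all⟩
      · rintro ⟨h, rfl⟩
        show (-1 : ℤˣ) ≠ 1
        decide
    rw [himg, Finset.card_image_of_injective _ (fun x y hxy => by
      simpa using congrArg SemidirectProduct.left hxy)]
    simp
  -- every such element is a product of an element of `insert 1 A` and an element of `B`
  have hsub : Finset.univ.filter (fun g : H ⋊[invAut H] ℤˣ => g.right ≠ 1)
      ⊆ ((insert (1 : H ⋊[invAut H] ℤˣ) A) ×ˢ B).image (fun p => p.1 * p.2) := by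
    intro g hg
    rw [Finset.mem_filter] at hg
    have hg' := hg.2
    rcases hcov g with rfl | hS | ⟨a, ha, b, hb, rfl⟩
    · exact absurd rfl hg'
    · refine Finset.mem_image.2 ⟨(1, g), ?_, one_mul g⟩
      simp [hB, hS, hg']
    · have hab : a.right * b.right ≠ 1 := hg'
      rcases Int.units_eq_one_or a.right with ha1 | ha1
      · have hb1 : b.right ≠ 1 := by
          intro h; exact hab (by rw [ha1, h, one_mul])
        refine Finset.mem_image.2 ⟨(a, b), ?_, rfl⟩
        simp [hA, hB, ha, hb, ha1, hb1]
      · have ha1' : a.right ≠ 1 := by rw [ha1]; decide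
        have hb1 : b.right = 1 := by
          rcases Int.units_eq_one_or b.right with h | h
          · exact h
          · exact absurd (by rw [ha1, h]; decide) hab
        refine Finset.mem_image.2 ⟨(b⁻¹, a), ?_, (key_swap H a b ha1' hb1).symm⟩
        have hbinv : b⁻¹.right = 1 := by
          rw [SemidirectProduct.inv_right, hb1]; decide
        simp [hA, hB, hinv b hb, ha, ha1', hbinv]
  calc Fintype.card H = (Finset.univ.filter (fun g : H ⋊[invAut H] ℤˣ => g.right ≠ 1)).card := hcard.symm
    _ ≤ (((insert (1 : H ⋊[invAut H] ℤˣ) A) ×ˢ B).image (fun p => p.1 * p.2)).card := Finset.card_le_card hsub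
    _ ≤ ((insert (1 : H ⋊[invAut H] ℤˣ) A) ×ˢ B).card := Finset.card_image_le
    _ = (insert (1 : H ⋊[invAut H] ℤˣ) A).card * B.card := Finset.card_product _ _
    _ ≤ (A.card + 1) * B.card := Nat.mul_le_mul_right _ (Finset.card_insert_le _ _)
    _ = m₂ * (m₁ + 1) := by rw [hm₁, hm₂, mul_comm]
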